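/- Let X, Y, A, B, C, D, E, F be n×n complex matrices with X² A + Y² B + X Y C + X D + Y E + F = 0 and suppose Xᵀ and Yᵀ have a common eigenvector for every eigenvalue of X (i.e., for each eigenvalue α of X there exist μ ∈ ℂ and a nonzero row vector g with g X = α g and g Y = μ g). Then every eigenvalue α of X appears as the first coordinate of a zero (α, μ) of the bivariate polynomial p(α, μ) = det(α² A + μ² B + α μ C + α D + μ E + F). -/
import Mathlib


theorem stmt_15 {n : ℕ} (X Y A B C D E F : Matrix (Fin n) (Fin n) ℂ)
    (h : X ^ 2 * A + Y ^ 2 * B + X * Y * C + X * D + Y * E + F = 0)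
    (hcommon : ∀ α : ℂ, (∃ v : Fin n → ℂ, v ≠ 0 ∧ X.mulVec v = α • v) →
      ∃ μ : ℂ, ∃ g : Fin n → ℂ, g ≠ 0 ∧
        Matrix.vecMul g X = α • g ∧ Matrix.vecMul g Y = μ • g) :
    ∀ α : ℂ, (∃ v : Fin n → ℂ, v ≠ 0 ∧ X.mulVec v = α • v) →
      ∃ μ : ℂ, (α ^ 2 • A + μ ^ 2 • B + (α * μ) • C + α • D + μ • E + F).det = 0 := by
  intro α hα
  obtain ⟨μ, g, hg, hgX, hgY⟩ := hcommon α hα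
  refine ⟨μ, ?_⟩
  have hsmul : ∀ (c : ℂ) (N : Matrix (Fin n) (Fin n) ℂ),
      Matrix.vecMul g (c • N) = c • Matrix.vecMul g N := by
    intro c N
    ext i
    simp [Matrix.vecMul, dotProduct, Finset.mul_sum, mul_comm, mul_left_comm]
  have key : Matrix.vecMul g (α ^ 2 • A + μ ^ 2 • B + (α * μ) • C + α • D + μ • E + F) = 0 := by
    have h1 : Matrix.vecMul g (X ^ 2 * A + Y ^ 2 * B + X * Y * C + X * D + Y * E + F) = 0 := by
      rw [h, Matrix.vecMul_zero]
    have hX2 : Matrix.vecMul g (X ^ 2) = (α ^ 2) • g := by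
      rw [sq, ← Matrix.vecMul_vecMul, hgX, Matrix.smul_vecMul, hgX, smul_smul, sq]
    have hXY : Matrix.vecMul g (X * Y) = (α * μ) • g := by
      rw [← Matrix.vecMul_vecMul, hgX, Matrix.smul_vecMul, hgY, smul_smul]
    have hY2 : Matrix.vecMul g (Y ^ 2) = (μ ^ 2) • g := by
      rw [sq, ← Matrix.vecMul_vecMul, hgY, Matrix.smul_vecMul, hgY, smul_smul, sq]
    calc Matrix.vecMul g (α ^ 2 • A + μ ^ 2 • B + (α * μ) • C + α • D + μ • E + F)
        = Matrix.vecMul g (X ^ 2 * A + Y ^ 2 * B + X * Y * C + X * D + Y * E + F) := by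
          simp only [Matrix.vecMul_add, hsmul, ← Matrix.vecMul_vecMul,
            hX2, hXY, hY2, hgX, hgY, Matrix.smul_vecMul]
      _ = 0 := h1
  exact Matrix.exists_vecMul_eq_zero_iff.mp ⟨g, hg, key⟩
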